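/- Let A be a real number with A > 1, and let N, n₀, d, d₀ be natural numbers with n₀ < N, d₀ ≤ d, and (N : ℝ) − n₀ ≤ A^(d₀ + 1) · (A^(d − d₀) − 1) / (A − 1). Then (d : ℝ) ≥ log(N − n₀) / log A + log(A − 1) / log A − 1, where log denotes the natural logarithm. -/

import Mathlib

theorem optimistic_planning_depth_bound
    (A : ℝ) (hA : 1 < A) (N n₀ d d₀ : ℕ)
    (hN : n₀ < N) (hd : d₀ ≤ d)
    (hbudget : (N : ℝ) - (n₀ : ℝ) ≤ A ^ (d₀ + 1) * (A ^ (d - d₀) - 1) / (A - 1)) :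
    (d : ℝ) ≥ Real.log ((N : ℝ) - (n₀ : ℝ)) / Real.log A
      + Real.log (A - 1) / Real.log A - 1 := by
  have hA0 : (0:ℝ) < A := by linarith
  have hA1 : (0:ℝ) < A - 1 := by linarith
  have hlogA : 0 < Real.log A := Real.log_pos hA
  have hM : (1:ℝ) ≤ (N : ℝ) - (n₀ : ℝ) := by
    have : (n₀ : ℝ) + 1 ≤ N := by exact_mod_cast hN
    linarith
  have hM0 : (0:ℝ) < (N : ℝ) - (n₀ : ℝ) := by linarith
  -- key: (N - n₀) * (A - 1) ≤ A ^ (d + 1)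
  have hkey : ((N : ℝ) - n₀) * (A - 1) ≤ A ^ (d + 1) := by
    have h1 : ((N : ℝ) - n₀) * (A - 1) ≤ A ^ (d₀ + 1) * (A ^ (d - d₀) - 1) := by
      linarith [(le_div_iff₀ hA1).mp hbudget]
    have h2 : A ^ (d₀ + 1) * (A ^ (d - d₀) - 1) ≤ A ^ (d + 1) := by
      have hp : (0:ℝ) < A ^ (d₀ + 1) := pow_pos hA0 _
      have : A ^ (d₀ + 1) * (A ^ (d - d₀) - 1) ≤ A ^ (d₀ + 1) * A ^ (d - d₀) := by
        nlinarith [pow_pos hA0 (d - d₀)]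
      calc A ^ (d₀ + 1) * (A ^ (d - d₀) - 1) ≤ A ^ (d₀ + 1) * A ^ (d - d₀) := this
        _ = A ^ (d₀ + 1 + (d - d₀)) := (pow_add A _ _).symm
        _ = A ^ (d + 1) := by congr 1; omega
    linarith
  have hlog : Real.log (((N : ℝ) - n₀) * (A - 1)) ≤ (d + 1) * Real.log A := by
    have := Real.log_le_log (by positivity) hkey
    rwa [Real.log_pow, Nat.cast_add, Nat.cast_one] at this
  rw [Real.log_mul (by linarith) (by linarith)] at hlog
  rw [ge_iff_le, sub_le_iff_le_add, ← add_div, div_le_iff₀ hlogA]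
  linarith
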